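/- For real z with 0 ≤ z < 1, ∑_{n=0}^{∞} (1/16^n) C(2n,n)^2 z^{2n} = (2/π) K(z), where K is the complete elliptic integral of the first kind. -/

import Mathlib

/-- Complete elliptic integral of the first kind. -/
noncomputable def ellipticK (k : ℝ) : ℝ :=
  ∫ θ in (0 : ℝ)..(Real.pi / 2), 1 / Real.sqrt (1 - k ^ 2 * Real.sin θ ^ 2)

open Real intervalIntegral Filter Set Topology MeasureTheory


lemma wallis (n : ℕ) : ∫ θ in (0:ℝ)..(π/2), Real.sin θ ^ (2*n)
    = (π/2) * (((2*n).choose n : ℝ) / 4 ^ n) := by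
  induction n with
  | zero => simp
  | succ k ih =>
    have h := integral_sin_pow (a := 0) (b := π/2) (2*k)
    have h2 : 2*(k+1) = 2*k + 2 := by ring
    rw [h2, h, ih]
    simp only [Real.sin_zero, Real.cos_pi_div_two, Real.sin_pi_div_two, Real.cos_zero]
    have hrec := Nat.succ_mul_centralBinom_succ k
    have hc : ((2*(k+1)).choose (k+1) : ℝ) * (k+1) = 2 * (2*k+1) * ((2*k).choose k : ℝ) := by
      have := congrArg (Nat.cast (R := ℝ)) hrec
      push_cast [Nat.centralBinom] at this ⊢
      linarith [this]
    have hk1 : ((k:ℝ)+1) ≠ 0 := by positivity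
    have h4 : (4:ℝ)^k ≠ 0 := by positivity
    field_simp at hc ⊢
    push_cast
    rw [show 2*(k+1)=2*k+2 from by ring] at hc
    linear_combination (-2 * (4:ℝ)^k * π) * hc

lemma Jcont {c : ℝ} (hc1 : c < 1) : Continuous (fun θ : ℝ => 1 / (1 - c * Real.sin θ ^ 2)) := by
  apply Continuous.div continuous_const
  · fun_prop
  · intro θ
    have hs : Real.sin θ ^ 2 ≤ 1 := by
      have := Real.sin_sq_le_one θ; linarith
    rcases le_or_gt c 0 with h | h
    · nlinarith [sq_nonneg (Real.sin θ)]
    · nlinarith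

lemma Jpos {c : ℝ} (hc0 : 0 ≤ c) (hc1 : c < 1) (θ : ℝ) : 1 - c ≤ 1 - c * Real.sin θ ^ 2 := by
  nlinarith [Real.sin_sq_le_one θ, sq_nonneg (Real.sin θ)]

lemma Jint {c : ℝ} (hc0 : 0 ≤ c) (hc1 : c < 1) :
    ∫ θ in (0:ℝ)..(π/2), 1 / (1 - c * Real.sin θ ^ 2) = π / (2 * Real.sqrt (1 - c)) := by
  set s := Real.sqrt (1 - c) with hs
  have hs0 : 0 < s := Real.sqrt_pos.mpr (by linarith)
  have hs2 : s ^ 2 = 1 - c := Real.sq_sqrt (by linarith)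
  set f : ℝ → ℝ := fun θ => 1 / (1 - c * Real.sin θ ^ 2) with hf
  set F : ℝ → ℝ := fun b => Real.arctan (s * Real.tan b) / s with hF
  have hfc : Continuous f := Jcont hc1
  have hint : ∀ a b : ℝ, IntervalIntegrable f MeasureTheory.volume a b :=
    fun a b => hfc.intervalIntegrable a b
  -- FTC on [0, b] for b < π/2
  have key : ∀ b ∈ Ico (0:ℝ) (π/2), ∫ θ in (0:ℝ)..b, f θ = F b := by
    intro b hb
    have hderiv : ∀ x ∈ uIcc (0:ℝ) b, HasDerivAt F (f x) x := by
      intro x hx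
      rw [uIcc_of_le hb.1] at hx
      have hx1 : 0 ≤ x := hx.1
      have hx2 : x < π/2 := lt_of_le_of_lt hx.2 hb.2
      have hcos : Real.cos x ≠ 0 := by
        have : 0 < Real.cos x := Real.cos_pos_of_mem_Ioo ⟨by linarith [Real.pi_pos], hx2⟩
        linarith
      have ht : HasDerivAt Real.tan (1 / Real.cos x ^ 2) x := Real.hasDerivAt_tan hcos
      have ht2 : HasDerivAt (fun y => s * Real.tan y) (s * (1 / Real.cos x ^ 2)) x := ht.const_mul s
      have ha : HasDerivAt Real.arctan (1 / (1 + (s * Real.tan x) ^ 2)) (s * Real.tan x) :=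
        Real.hasDerivAt_arctan _
      have := (ha.comp x ht2).div_const s
      refine this.congr_deriv (Eq.symm ?_)
      have hc2 : Real.cos x ^ 2 + Real.sin x ^ 2 = 1 := by
        rw [add_comm]; exact Real.sin_sq_add_cos_sq x
      have hden : 1 - c * Real.sin x ^ 2 = Real.cos x ^ 2 * (1 + (s * Real.tan x) ^ 2) := by
        rw [Real.tan_eq_sin_div_cos]
        field_simp
        nlinarith [hs2, hc2]
      rw [hf]
      simp only
      rw [hden]
      have h1 : (1 + (s * Real.tan x) ^ 2) > 0 := by positivity
      field_simp
    have := intervalIntegral.integral_eq_sub_of_hasDerivAt hderiv (hint 0 b)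
    rw [this, hF]
    simp [Real.tan_zero, Real.arctan_zero]
  -- continuity of the primitive
  have hG : Continuous (fun b => ∫ θ in (0:ℝ)..b, f θ) :=
    intervalIntegral.continuous_primitive hint 0
  have hGt : Tendsto (fun b => ∫ θ in (0:ℝ)..b, f θ) (𝓝[<] (π/2)) (𝓝 (∫ θ in (0:ℝ)..(π/2), f θ)) :=
    (hG.tendsto _).mono_left nhdsWithin_le_nhds
  have hFt : Tendsto F (𝓝[<] (π/2)) (𝓝 (π / (2 * s))) := by
    have h1 : Tendsto Real.tan (𝓝[<] (π/2)) atTop := Real.tendsto_tan_pi_div_two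
    have h2 : Tendsto (fun b => s * Real.tan b) (𝓝[<] (π/2)) atTop :=
      Tendsto.const_mul_atTop hs0 h1
    have h3 : Tendsto (fun b => Real.arctan (s * Real.tan b)) (𝓝[<] (π/2)) (𝓝 (π/2)) :=
      (tendsto_nhds_of_tendsto_nhdsWithin Real.tendsto_arctan_atTop).comp h2
    have h4 := h3.div_const s
    convert h4 using 2
    field_simp
  have heq : (fun b => ∫ θ in (0:ℝ)..b, f θ) =ᶠ[𝓝[<] (π/2)] F := by
    filter_upwards [Ico_mem_nhdsLT (by positivity : (0:ℝ) < π/2)] with b hb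
    exact key b hb
  have := tendsto_nhds_unique (hGt.congr' heq) hFt
  rw [this]

lemma swap_lemma {x : ℝ} (hx0 : 0 ≤ x) (hx1 : x < 1) (c : ℕ → ℝ)
    (hc0 : ∀ n, 0 ≤ c n) (hc1 : ∀ n, c n ≤ 1) :
    ∫ θ in (0:ℝ)..(π/2), (∑' n : ℕ, c n * x ^ n * Real.sin θ ^ (2*n))
      = ∑' n : ℕ, c n * x ^ n * ∫ θ in (0:ℝ)..(π/2), Real.sin θ ^ (2*n) := by
  have hpi : (0:ℝ) ≤ π/2 := by positivity
  have hbound : ∀ n θ, ‖c n * x ^ n * Real.sin θ ^ (2*n)‖ ≤ x ^ n := by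
    intro n θ
    have h1 : |Real.sin θ ^ (2*n)| ≤ 1 := by
      rw [abs_pow]
      exact pow_le_one₀ (abs_nonneg _) (Real.abs_sin_le_one θ)
    have hxn : (0:ℝ) ≤ x ^ n := by positivity
    rw [norm_mul, norm_mul, Real.norm_eq_abs, Real.norm_eq_abs, Real.norm_eq_abs,
      abs_of_nonneg (hc0 n), abs_of_nonneg hxn]
    calc c n * x ^ n * |Real.sin θ ^ (2*n)| ≤ 1 * x ^ n * 1 := by
          apply mul_le_mul _ h1 (abs_nonneg _) (by positivity)
          exact mul_le_mul (hc1 n) le_rfl hxn zero_le_one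
      _ = x ^ n := by ring
  rw [intervalIntegral.integral_of_le hpi]
  rw [MeasureTheory.integral_tsum]
  · congr 1; funext n
    rw [intervalIntegral.integral_of_le hpi, MeasureTheory.integral_const_mul]
  · intro n
    exact (((Real.continuous_sin.pow (2*n)).const_smul (c n * x ^ n)).aestronglyMeasurable)
  · have hb : ∀ n : ℕ, (∫⁻ θ in Ioc (0:ℝ) (π/2), ‖c n * x ^ n * Real.sin θ ^ (2*n)‖₊)
        ≤ ENNReal.ofReal (x ^ n) * ENNReal.ofReal (π/2) := by
      intro n
      calc (∫⁻ θ in Ioc (0:ℝ) (π/2), ‖c n * x ^ n * Real.sin θ ^ (2*n)‖₊)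
          ≤ ∫⁻ _ in Ioc (0:ℝ) (π/2), ENNReal.ofReal (x ^ n) := by
            apply lintegral_mono
            intro θ
            simp only
            rw [← enorm_eq_nnnorm, ← ofReal_norm]
            exact ENNReal.ofReal_le_ofReal (hbound n θ)
        _ = ENNReal.ofReal (x ^ n) * ENNReal.ofReal (π/2) := by
            rw [MeasureTheory.lintegral_const, Measure.restrict_apply_univ, Real.volume_Ioc]
            norm_num
    apply ne_top_of_le_ne_top _ (ENNReal.tsum_le_tsum hb)
    rw [ENNReal.tsum_mul_right]
    apply ENNReal.mul_ne_top _ ENNReal.ofReal_ne_top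
    have : ∀ n : ℕ, ENNReal.ofReal (x ^ n) = ENNReal.ofReal x ^ n := by
      intro n; rw [ENNReal.ofReal_pow hx0]
    simp_rw [this]
    rw [ENNReal.tsum_geometric]
    simp only [ne_eq, ENNReal.inv_eq_top]
    rw [tsub_eq_zero_iff_le]
    intro h
    have := ENNReal.one_le_ofReal.mp h
    linarith

lemma central_le (n : ℕ) : ((2*n).choose n : ℝ) ≤ 4 ^ n := by
  have h : (2*n).choose n ≤ 2 ^ (2*n) := by
    calc (2*n).choose n ≤ ∑ i ∈ Finset.range (2*n+1), (2*n).choose i :=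
          Finset.single_le_sum (fun i _ => Nat.zero_le _) (by simp [Nat.lt_succ]; omega)
      _ = 2 ^ (2*n) := Nat.sum_range_choose (2*n)
  calc ((2*n).choose n : ℝ) ≤ (2:ℝ) ^ (2*n) := by exact_mod_cast h
    _ = 4 ^ n := by rw [pow_mul]; norm_num

lemma an_le_one (n : ℕ) : ((2*n).choose n : ℝ) / 4 ^ n ≤ 1 := by
  rw [div_le_one (by positivity)]; exact central_le n

lemma binom_series {x : ℝ} (hx0 : 0 ≤ x) (hx1 : x < 1) :
    ∑' n : ℕ, (((2*n).choose n : ℝ) / 4 ^ n) * x ^ n = 1 / Real.sqrt (1 - x) := by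
  have key : ∀ n : ℕ, (((2*n).choose n : ℝ) / 4 ^ n) * x ^ n
      = (2/π) * ((1:ℝ) * x ^ n * ∫ θ in (0:ℝ)..(π/2), Real.sin θ ^ (2*n)) := by
    intro n
    rw [wallis n]
    have : π ≠ 0 := Real.pi_ne_zero
    field_simp
  rw [tsum_congr key, tsum_mul_left, ← swap_lemma hx0 hx1 _ (fun _ => zero_le_one) (fun _ => le_rfl)]
  have hpt : ∀ θ : ℝ, (∑' n : ℕ, (1:ℝ) * x ^ n * Real.sin θ ^ (2*n))
      = 1 / (1 - x * Real.sin θ ^ 2) := by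
    intro θ
    have h1 : ∀ n : ℕ, (1:ℝ) * x ^ n * Real.sin θ ^ (2*n) = (x * Real.sin θ ^ 2) ^ n := by
      intro n; rw [one_mul, pow_mul, ← mul_pow]
    rw [tsum_congr h1, tsum_geometric_of_lt_one (by positivity)
      (by nlinarith [Real.sin_sq_le_one θ, sq_nonneg (Real.sin θ)]), one_div]
  rw [intervalIntegral.integral_congr (fun θ _ => hpt θ), Jint hx0 hx1]
  have hs : Real.sqrt (1-x) ≠ 0 := Real.sqrt_ne_zero'.mpr (by linarith)
  have hpi : π ≠ 0 := Real.pi_ne_zero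
  field_simp


theorem rw2d_return_genfun (z : ℝ) (h0 : 0 ≤ z) (h1 : z < 1) :
    ∑' n : ℕ, (1 / 16 ^ n) * ((2 * n).choose n : ℝ) ^ 2 * z ^ (2 * n) =
      (2 / Real.pi) * ellipticK z := by
  have hz2 : z ^ 2 < 1 := by nlinarith
  have hz20 : 0 ≤ z ^ 2 := sq_nonneg z
  set a : ℕ → ℝ := fun n => ((2*n).choose n : ℝ) / 4 ^ n with ha
  have key : ∀ n : ℕ, (1 / 16 ^ n) * ((2 * n).choose n : ℝ) ^ 2 * z ^ (2 * n)
      = (2/π) * (a n * (z^2) ^ n * ∫ θ in (0:ℝ)..(π/2), Real.sin θ ^ (2*n)) := by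
    intro n
    rw [wallis n, ← pow_mul]
    have h16 : (16:ℝ)^n = 4^n * 4^n := by rw [← mul_pow]; norm_num
    have h4 : (4:ℝ)^n ≠ 0 := by positivity
    have hpi : π ≠ 0 := Real.pi_ne_zero
    rw [ha]
    simp only
    field_simp [h16]
    rw [h16]
    ring
  rw [tsum_congr key, tsum_mul_left,
    ← swap_lemma hz20 hz2 a (fun n => by positivity) (fun n => an_le_one n)]
  have hpt : ∀ θ : ℝ, (∑' n : ℕ, a n * (z^2) ^ n * Real.sin θ ^ (2*n))
      = 1 / Real.sqrt (1 - z^2 * Real.sin θ ^ 2) := by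
    intro θ
    have h1 : ∀ n : ℕ, a n * (z^2) ^ n * Real.sin θ ^ (2*n)
        = a n * (z^2 * Real.sin θ ^ 2) ^ n := by
      intro n; rw [pow_mul, mul_pow, mul_assoc]
    rw [tsum_congr h1]
    exact binom_series (by positivity)
      (by nlinarith [Real.sin_sq_le_one θ, sq_nonneg (Real.sin θ)])
  rw [intervalIntegral.integral_congr (fun θ _ => hpt θ)]
  rfl
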